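/- Relation head of the ICL construction (β→∞ limit): Consider the relation head with weights W_KQ^rel = β Σ_{l=1}^L (Σ_{u∈U_l} E(u)) E([sep])^T and W_OV^rel = Σ_{l=1}^L (Σ_{u∈U_l} E(u))(Σ_{u∈U_l} E(u) + E(r_l))^T. For every ICL sequence X with shared attribute type l* and N demonstrations, as β→∞ the attention at the last position distributes uniformly over the N attribute positions, so that lim_{β→∞} g_rel(X) = (1/N) Σ_{i=1}^N E(a_{j_i}^{l*}) and lim_{β→∞} W_OV^rel g_rel(X) = Σ_{u∈U_{l*}} E(u), i.e., the head outputs the sum of all attribute values of the shared type l*. -/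

import Mathlib

open Filter Topology Finset Matrix

namespace CR

/-- Vocabulary tokens: `M` subjects, `L` attribute types each with `U` values,
`G` grammar tokens, `L` relation tokens, and a separator. -/
inductive Tok (M L U G : ℕ) : Type where
  | subj : Fin M → Tok M L U G
  | attr : Fin L → Fin U → Tok M L U G
  | gram : Fin G → Tok M L U G
  | rel  : Fin L → Tok M L U G
  | sep  : Tok M L U G
deriving DecidableEq, Fintype

/-- Embedding dimension: one coordinate per vocabulary token plus `P` positional coordinates. -/
abbrev Dim (M L U G P : ℕ) := Tok M L U G ⊕ Fin P

abbrev Vec (M L U G P : ℕ) := Dim M L U G P → ℝ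

variable {M L U G P : ℕ}

/-- One-hot token embedding `E(v)`. -/
def E (v : Tok M L U G) : Vec M L U G P :=
  fun i => if i = Sum.inl v then 1 else 0

/-- One-hot positional encoding for relative position `-k`
(`pos 0 = E(p₀)`, `pos 1 = E(p₋₁)`, ...); zero if `k ≥ P`. -/
def pos (k : ℕ) : Vec M L U G P :=
  fun i => match i with
  | Sum.inl _ => 0
  | Sum.inr j => if (j : ℕ) = k then 1 else 0

/-- Softmax attention weight of (0-indexed) row `j` among rows `0,…,t-1`, with query row `t-1`;
row `i` carries the relative positional encoding `p_{-(t-1-i)}`. -/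
noncomputable def attn (W : Matrix (Dim M L U G P) (Dim M L U G P) ℝ)
    (X : ℕ → Vec M L U G P) (t j : ℕ) : ℝ :=
  Real.exp ((X j + pos (t - 1 - j)) ⬝ᵥ W.mulVec (X (t - 1))) /
    ∑ i ∈ Finset.range t, Real.exp ((X i + pos (t - 1 - i)) ⬝ᵥ W.mulVec (X (t - 1)))

/-- Attention-head output `g_h^t(X)` (attention over the first `t` rows, query at row `t-1`). -/
noncomputable def gHead (W : Matrix (Dim M L U G P) (Dim M L U G P) ℝ)
    (X : ℕ → Vec M L U G P) (t : ℕ) : Vec M L U G P :=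
  ∑ j ∈ Finset.range t, attn W X t j • X j

/-- Token at (0-indexed) position `t` of a PT sequence with subject `jstar`:
block `k` occupies positions `k(S+3),…,k(S+3)+S+1` (subject, `S` middle tokens, separator),
followed (except after the last block) by the attribute `a_{jstar}^{ltype k}`. -/
def ptTok (S : ℕ) (jstar : Fin M) (ltype : ℕ → Fin L)
    (mid : ℕ → ℕ → Tok M L U G) (a : Fin M → Fin L → Fin U) (t : ℕ) : Tok M L U G :=
  let k := t / (S + 3)
  let r := t % (S + 3)
  if r = 0 then Tok.subj jstar
  else if r ≤ S then mid k (r - 1)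
  else if r = S + 1 then Tok.sep
  else Tok.attr (ltype k) (a jstar (ltype k))

/-- Token at (0-indexed) position `t` of an ICL sequence with shared attribute type `lstar`
and subjects `js 0, js 1, …`: the pattern is subject, separator, attribute, subject, … -/
def iclTok (a : Fin M → Fin L → Fin U) (js : ℕ → Fin M) (lstar : Fin L) (t : ℕ) :
    Tok M L U G :=
  if t % 3 = 0 then Tok.subj (js (t / 3))
  else if t % 3 = 1 then Tok.sep
  else Tok.attr lstar (a (js (t / 3)) lstar)


lemma dotE (v w : Tok M L U G) : (E v : Vec M L U G P) ⬝ᵥ E w = if v = w then 1 else 0 := by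
  simp only [dotProduct, E, ite_mul, one_mul, zero_mul]
  rw [Finset.sum_ite_eq' Finset.univ (Sum.inl v)]
  simp

lemma dotPosE (k : ℕ) (w : Tok M L U G) : (pos k : Vec M L U G P) ⬝ᵥ E w = 0 := by
  simp only [dotProduct, pos, E]
  rw [Fintype.sum_sum_type]
  simp

lemma vecMulVec_mulVec' (v w x : Vec M L U G P) :
    (Matrix.vecMulVec v w).mulVec x = (w ⬝ᵥ x) • v := by
  funext i
  simp only [Matrix.mulVec, Matrix.vecMulVec_apply, dotProduct, Pi.smul_apply, smul_eq_mul,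
    Finset.mul_sum, Finset.sum_mul]
  exact Fintype.sum_congr _ _ fun j => by ring

lemma sum_mulVec' {ι : Type*} (s : Finset ι) (A : ι → Matrix (Dim M L U G P) (Dim M L U G P) ℝ)
    (x : Vec M L U G P) : (∑ l ∈ s, A l).mulVec x = ∑ l ∈ s, (A l).mulVec x := by
  funext i
  simp only [Matrix.mulVec, dotProduct, Finset.sum_apply, Matrix.sum_apply, Finset.sum_mul]
  rw [Finset.sum_comm]

lemma sum_mod3 {A : Type*} [AddCommMonoid A] (n : ℕ) (f : ℕ → A) :
    ∑ j ∈ Finset.range (3*n+2), (if j % 3 = 2 then f j else 0) = ∑ i ∈ Finset.range n, f (3*i+2) := by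
  induction n with
  | zero =>
    rw [show 3*0+2 = 2 from rfl, Finset.sum_range_succ, Finset.sum_range_succ]
    norm_num
  | succ n ih =>
    have h : 3*(n+1)+2 = (3*n+2)+1+1+1 := by ring
    rw [h, Finset.sum_range_succ, Finset.sum_range_succ, Finset.sum_range_succ, ih,
      Finset.sum_range_succ]
    have h1 : (3*n+2) % 3 = 2 := by omega
    have h2 : (3*n+2+1) % 3 = 0 := by omega
    have h3 : (3*n+2+1+1) % 3 = 1 := by omega
    simp [h1, h2, h3]


lemma dot_sumR {ι : Type*} (s : Finset ι) (x : Vec M L U G P) (f : ι → Vec M L U G P) :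
    x ⬝ᵥ (∑ i ∈ s, f i) = ∑ i ∈ s, x ⬝ᵥ f i := by
  simp only [dotProduct, Finset.sum_apply, Finset.mul_sum]
  rw [Finset.sum_comm]

lemma sum_dotR {ι : Type*} (s : Finset ι) (x : Vec M L U G P) (f : ι → Vec M L U G P) :
    (∑ i ∈ s, f i) ⬝ᵥ x = ∑ i ∈ s, f i ⬝ᵥ x := by
  simp only [dotProduct, Finset.sum_apply, Finset.sum_mul]
  rw [Finset.sum_comm]

lemma mulVec_sumVec {ι : Type*} (A : Matrix (Dim M L U G P) (Dim M L U G P) ℝ)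
    (s : Finset ι) (f : ι → Vec M L U G P) :
    A.mulVec (∑ i ∈ s, f i) = ∑ i ∈ s, A.mulVec (f i) := by
  funext i
  simp only [Matrix.mulVec, dotProduct, Finset.sum_apply, Finset.mul_sum]
  rw [Finset.sum_comm]

lemma lim_one {n : ℝ} (hn : 0 < n) {C : ℝ} (hC : 0 ≤ C) :
    Filter.Tendsto (fun β : ℝ => Real.exp β / (n * Real.exp β + C)) Filter.atTop (𝓝 n⁻¹) := by
  have h1 : Filter.Tendsto (fun β : ℝ => n + C * Real.exp (-β)) Filter.atTop (𝓝 n) := by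
    have := (Real.tendsto_exp_neg_atTop_nhds_zero.const_mul C)
    simpa using tendsto_const_nhds.add this
  have h2 := h1.inv₀ (ne_of_gt hn)
  refine h2.congr fun β => ?_
  have he := Real.exp_pos β
  rw [Real.exp_neg]
  field_simp

lemma lim_zero {n : ℝ} (hn : 0 < n) {C : ℝ} (hC : 0 ≤ C) :
    Filter.Tendsto (fun β : ℝ => 1 / (n * Real.exp β + C)) Filter.atTop (𝓝 0) := by
  have h1 : Filter.Tendsto (fun β : ℝ => n * Real.exp β + C) Filter.atTop Filter.atTop := by
    exact tendsto_atTop_add_const_right _ C (Real.tendsto_exp_atTop.const_mul_atTop hn)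
  simpa only [one_div, Pi.inv_def] using h1.inv_tendsto_atTop

/-- Relation head of the ICL construction (β→∞ limit). -/
theorem relation_head_ICL_limit
    (M L U G P N : ℕ) (hN : 0 < N) (T : ℕ) (hT : T = 3 * (N + 1) - 1) (hP : T ≤ P)
    (a : Fin M → Fin L → Fin U) (lstar : Fin L) (js : ℕ → Fin M)
    (X : ℕ → Vec M L U G P) (hX : ∀ t, X t = E (iclTok a js lstar t))
    (WKQ0 WOV : Matrix (Dim M L U G P) (Dim M L U G P) ℝ)
    (hKQ : WKQ0 = Matrix.vecMulVec
      (∑ l : Fin L, ∑ u : Fin U, E (Tok.attr l u)) (E Tok.sep))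
    (hOV : WOV = ∑ l : Fin L, Matrix.vecMulVec
      (∑ u : Fin U, E (Tok.attr l u))
      ((∑ u : Fin U, E (Tok.attr l u)) + E (Tok.rel l))) :
    Filter.Tendsto (fun β : ℝ => gHead (β • WKQ0) X T) Filter.atTop
      (𝓝 ((N : ℝ)⁻¹ • ∑ i ∈ Finset.range N, E (Tok.attr lstar (a (js i) lstar)))) ∧
    Filter.Tendsto (fun β : ℝ => WOV.mulVec (gHead (β • WKQ0) X T)) Filter.atTop
      (𝓝 (∑ u : Fin U, E (Tok.attr lstar u))) := by
  have hT' : T = 3 * N + 2 := by omega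
  set v : Vec M L U G P := ∑ l : Fin L, ∑ u : Fin U, E (Tok.attr l u) with hv
  -- dot products with v
  have hattr : ∀ (l0 : Fin L) (u0 : Fin U),
      (E (Tok.attr l0 u0) : Vec M L U G P) ⬝ᵥ v = 1 := by
    intro l0 u0
    rw [hv, dot_sumR]
    simp only [dot_sumR, dotE, Tok.attr.injEq]
    rw [Finset.sum_eq_single l0]
    · rw [Finset.sum_eq_single u0] <;> simp +contextual [eq_comm]
    · intro b _ hb
      simp [Ne.symm hb]
    · simp
  have hnot : ∀ t : Tok M L U G, (∀ l0 u0, t ≠ Tok.attr l0 u0) →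
      (E t : Vec M L U G P) ⬝ᵥ v = 0 := by
    intro t ht
    rw [hv, dot_sumR]
    simp only [dot_sumR, dotE]
    refine Finset.sum_eq_zero fun l _ => Finset.sum_eq_zero fun u _ => ?_
    simp [ht l u]
  -- the query vector
  have hsep : X (T - 1) = E Tok.sep := by
    rw [hX, iclTok]
    have h1 : (T - 1) % 3 = 1 := by omega
    simp [h1]
  -- score
  have hscore : ∀ (β : ℝ) (j : ℕ),
      (X j + pos (T - 1 - j)) ⬝ᵥ ((β • WKQ0).mulVec (X (T - 1)))
        = β * (if j % 3 = 2 then 1 else 0) := by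
    intro β j
    rw [hsep, Matrix.smul_mulVec, hKQ, vecMulVec_mulVec', dotE, if_pos rfl, one_smul]
    rw [dotProduct_smul, add_dotProduct, hX j]
    have hpv : (pos (T - 1 - j) : Vec M L U G P) ⬝ᵥ v = 0 := by
      rw [hv, dot_sumR]
      simp only [dot_sumR, dotPosE]
      simp
    rw [hpv, add_zero, smul_eq_mul]
    congr 1
    rw [iclTok]
    rcases h3 : j % 3 with _ | k
    · simp only [h3, if_pos rfl] at *
      simp [hnot (Tok.subj (js (j / 3))) (by intro l0 u0 h; cases h)]
    · rcases k with _ | k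
      · simp only [h3]
        norm_num
        exact hnot Tok.sep (by intro l0 u0 h; cases h)
      · have hk : k = 0 := by omega
        subst hk
        simp only [h3]
        norm_num
        exact hattr lstar _
  -- denominator
  have hD : ∀ β : ℝ,
      (∑ i ∈ Finset.range T,
        Real.exp ((X i + pos (T - 1 - i)) ⬝ᵥ ((β • WKQ0).mulVec (X (T - 1)))))
        = N * Real.exp β + (2 * N + 2) := by
    intro β
    have step : ∀ i, Real.exp ((X i + pos (T - 1 - i)) ⬝ᵥ ((β • WKQ0).mulVec (X (T - 1))))
        = (if i % 3 = 2 then Real.exp β - 1 else 0) + 1 := by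
      intro i
      rw [hscore β i]
      split <;> simp
    rw [Finset.sum_congr rfl fun i _ => step i, Finset.sum_add_distrib, hT',
      sum_mod3 N (fun _ => Real.exp β - 1), Finset.sum_const, Finset.sum_const,
      Finset.card_range, Finset.card_range]
    push_cast
    ring
  -- attention weights
  have hattn : ∀ (β : ℝ) (j : ℕ), attn (β • WKQ0) X T j
      = (if j % 3 = 2 then Real.exp β else 1) / (N * Real.exp β + (2 * N + 2)) := by
    intro β j
    rw [attn, hscore β j, hD β]
    split <;> simp
  -- pointwise limits
  have C0 : (0 : ℝ) ≤ 2 * N + 2 := by positivity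
  have hNpos : (0 : ℝ) < N := by exact_mod_cast hN
  have key : Filter.Tendsto (fun β : ℝ => gHead (β • WKQ0) X T) Filter.atTop
      (𝓝 (∑ j ∈ Finset.range T, (if j % 3 = 2 then ((N : ℝ)⁻¹ • X j) else 0))) := by
    unfold gHead
    refine tendsto_finset_sum _ fun j _ => ?_
    have := hattn
    by_cases hj : j % 3 = 2
    · simp only [hj, if_pos rfl]
      refine Filter.Tendsto.congr (fun β => by rw [hattn β j, if_pos hj]) ?_
      exact (lim_one hNpos C0).smul_const (X j)
    · simp only [hj, if_neg hj]
      refine Filter.Tendsto.congr (fun β => by rw [hattn β j, if_neg hj]) ?_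
      simpa using (lim_zero hNpos C0).smul_const (X j)
  -- identify the limit vector
  have hXi : ∀ i : ℕ, X (3 * i + 2) = E (Tok.attr lstar (a (js i) lstar)) := by
    intro i
    rw [hX, iclTok]
    have h1 : (3 * i + 2) % 3 = 2 := by omega
    have h2 : (3 * i + 2) / 3 = i := by omega
    simp [h1, h2]
  have hsum : (∑ j ∈ Finset.range T, (if j % 3 = 2 then ((N : ℝ)⁻¹ • X j) else 0))
      = (N : ℝ)⁻¹ • ∑ i ∈ Finset.range N, E (Tok.attr lstar (a (js i) lstar)) := by
    rw [hT', sum_mod3 N (fun j => (N : ℝ)⁻¹ • X j), Finset.smul_sum]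
    exact Finset.sum_congr rfl fun i _ => by rw [hXi i]
  have first : Filter.Tendsto (fun β : ℝ => gHead (β • WKQ0) X T) Filter.atTop
      (𝓝 ((N : ℝ)⁻¹ • ∑ i ∈ Finset.range N, E (Tok.attr lstar (a (js i) lstar)))) := by
    rw [← hsum]; exact key
  refine ⟨first, ?_⟩
  -- second part
  have cont : Continuous (fun y : Vec M L U G P => WOV.mulVec y) := by
    apply continuous_pi
    intro i
    simp only [Matrix.mulVec, dotProduct]
    exact continuous_finset_sum _ fun j _ => continuous_const.mul (continuous_apply j)
  have second := (cont.tendsto _).comp first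
  have hOVattr : ∀ u0 : Fin U, WOV.mulVec (E (Tok.attr lstar u0))
      = ∑ u : Fin U, E (Tok.attr lstar u) := by
    intro u0
    rw [hOV, sum_mulVec']
    have hterm : ∀ l : Fin L,
        (Matrix.vecMulVec (∑ u : Fin U, (E (Tok.attr l u) : Vec M L U G P))
          (((∑ u : Fin U, E (Tok.attr l u)) + E (Tok.rel l)) : Vec M L U G P)).mulVec
          ((E (Tok.attr lstar u0)) : Vec M L U G P)
        = (if lstar = l then (1 : ℝ) else 0) • (∑ u : Fin U, (E (Tok.attr l u) : Vec M L U G P)) := by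
      intro l
      rw [vecMulVec_mulVec', add_dotProduct, sum_dotR]
      have h1 : (∑ u : Fin U, (E (Tok.attr l u) : Vec M L U G P) ⬝ᵥ E (Tok.attr lstar u0))
          = if lstar = l then 1 else 0 := by
        simp only [dotE, Tok.attr.injEq]
        by_cases hl : lstar = l
        · subst hl
          rw [Finset.sum_eq_single u0] <;> simp +contextual [eq_comm]
        · rw [if_neg hl]
          refine Finset.sum_eq_zero fun u _ => ?_
          exact if_neg (fun h => hl h.1.symm)
      rw [h1, dotE, if_neg (fun h : (Tok.rel l : Tok M L U G) = Tok.attr lstar u0 => by cases h), add_zero]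
    rw [Finset.sum_congr rfl fun l _ => hterm l]
    simp [Finset.sum_ite_eq]
  have hWv : WOV.mulVec ((N : ℝ)⁻¹ • ∑ i ∈ Finset.range N, E (Tok.attr lstar (a (js i) lstar)))
      = ∑ u : Fin U, E (Tok.attr lstar u) := by
    rw [Matrix.mulVec_smul, mulVec_sumVec]
    rw [Finset.sum_congr rfl fun i _ => hOVattr (a (js i) lstar)]
    rw [Finset.sum_const, Finset.card_range, ← Nat.cast_smul_eq_nsmul ℝ, smul_smul,
      inv_mul_cancel₀ (ne_of_gt hNpos), one_smul]
  rw [← hWv]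
  exact second

end CR
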